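/- In the quadrature setting, the approximation u_{k*} selected by the parameter choice rule satisfies the alternative error bound ‖u† − u_{k*}‖_{L²(μ)} ≤ 3‖u† − u_{k_opt}‖_{L²(μ)} + 4√(μ(Γ)) ‖u† − u_best‖_∞ + 2ε. -/

import Mathlib

open MeasureTheory
open scoped RealInnerProductSpace

set_option maxHeartbeats 1000000


lemma aux_nw_triangle (M : ℕ) (w : Fin M → ℝ) (hw : ∀ i, 0 ≤ w i) (y z : Fin M → ℝ) :
    Real.sqrt (∑ i, w i * (y i + z i) ^ 2) ≤
      Real.sqrt (∑ i, w i * y i ^ 2) + Real.sqrt (∑ i, w i * z i ^ 2) := by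
  have key : ∀ v : Fin M → ℝ,
      Real.sqrt (∑ i, w i * v i ^ 2) =
        ‖(WithLp.equiv 2 (Fin M → ℝ)).symm (fun i => Real.sqrt (w i) * v i)‖ := by
    intro v
    rw [EuclideanSpace.norm_eq]
    congr 1
    refine Finset.sum_congr rfl fun i _ => ?_
    simp only [WithLp.equiv_symm_apply, PiLp.toLp_apply]
    rw [Real.norm_eq_abs, sq_abs, mul_pow, Real.sq_sqrt (hw i)]
  rw [key, key, key]
  have heq : (fun i => Real.sqrt (w i) * (y i + z i)) =
      (fun i => Real.sqrt (w i) * y i) + (fun i => Real.sqrt (w i) * z i) := by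
    funext i
    simp only [Pi.add_apply]
    ring
  rw [heq, WithLp.equiv_symm_apply, WithLp.toLp_add]
  exact norm_add_le _ _

/-- In the quadrature setting, the approximation `u k⋆` selected by the parameter
choice rule satisfies the alternative error bound
`‖u† − u_{k⋆}‖_{L²} ≤ 3‖u† − u_{k_opt}‖_{L²} + 4√(μ Γ) ‖u† − u_best‖_∞ + 2ε`. -/
theorem alternative_error_bound_via_best_uniform_approximation
    {Γ : Type*} [TopologicalSpace Γ] [CompactSpace Γ] [MeasurableSpace Γ] [BorelSpace Γ]
    (μ : Measure Γ) [IsFiniteMeasure μ]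
    (M : ℕ) (x : Fin M → Γ) (w : Fin M → ℝ) (hw : ∀ i, 0 < w i)
    (hsum : ∑ i, w i = (μ Set.univ).toReal)
    (V : Submodule ℝ C(Γ, ℝ)) [FiniteDimensional ℝ V]
    (hquad : ∀ g ∈ V, ∀ gbar ∈ V,
      ∫ t, g t * gbar t ∂μ = ∑ i, w i * (g (x i) * gbar (x i)))
    (L2norm : C(Γ, ℝ) → ℝ)
    (hL2 : ∀ g : C(Γ, ℝ), L2norm g = Real.sqrt (∫ t, (g t) ^ 2 ∂μ))
    (udag f : C(Γ, ℝ)) (ε : ℝ) (hε : 0 < ε)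
    (hnoise : Real.sqrt (∑ i, w i * (udag (x i) - f (x i)) ^ 2) ≤ ε)
    (N : ℕ) (u : Fin N → C(Γ, ℝ)) (huV : ∀ k, u k ∈ V)
    (hne : ∃ k l, u k ≠ u l)
    (A : Set C(Γ, ℝ))
    (hA : A = {a | ∃ k l, u k ≠ u l ∧ a = (L2norm (u k - u l))⁻¹ • (u k - u l)})
    (h : Fin N → C(Γ, ℝ) → ℝ)
    (hh : ∀ k a, h k a = (∫ t, u k t * a t ∂μ) - ∑ i, w i * (f (x i) * a (x i)))
    (H : Fin N → ℝ)
    (hH : ∀ k, IsGreatest ((fun a => |h k a|) '' A) (H k))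
    (kopt : Fin N)
    (hkopt : ∀ k, L2norm (udag - u kopt) ≤ L2norm (udag - u k))
    (kstar : Fin N)
    (hkstar : ∀ k, H kstar ≤ H k)
    (ubest : C(Γ, ℝ)) (hubestV : ubest ∈ V)
    (hubest : ∀ v ∈ V, ‖udag - ubest‖ ≤ ‖udag - v‖) :
    L2norm (udag - u kstar) ≤ 3 * L2norm (udag - u kopt) +
      4 * Real.sqrt (μ Set.univ).toReal * ‖udag - ubest‖ + 2 * ε := by
  classical
  set T : C(Γ, ℝ) →L[ℝ] Lp ℝ 2 μ := ContinuousMap.toLp 2 μ ℝ with hT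
  -- the inner product on L² computes the integral of the product
  have hinner : ∀ g g' : C(Γ, ℝ), ⟪T g, T g'⟫ = ∫ t, g t * g' t ∂μ := by
    intro g g'
    rw [hT, L2.inner_def]
    refine integral_congr_ae ?_
    filter_upwards [ContinuousMap.coeFn_toLp (p := 2) μ (𝕜 := ℝ) g,
      ContinuousMap.coeFn_toLp (p := 2) μ (𝕜 := ℝ) g'] with t h1 h2
    rw [RCLike.inner_apply, conj_trivial, h1, h2, mul_comm]
  have hnormsq : ∀ g : C(Γ, ℝ), ‖T g‖ ^ 2 = ∫ t, g t ^ 2 ∂μ := by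
    intro g
    rw [← real_inner_self_eq_norm_sq, hinner]
    congr 1; funext t; ring
  have hL2T : ∀ g : C(Γ, ℝ), L2norm g = ‖T g‖ := by
    intro g
    rw [hL2, ← hnormsq, Real.sqrt_sq (norm_nonneg _)]
  -- weighted discrete (semi)norm
  set nw : (Fin M → ℝ) → ℝ := fun y => Real.sqrt (∑ i, w i * y i ^ 2) with hnwdef
  have hnw_tri : ∀ y z : Fin M → ℝ, nw (fun i => y i + z i) ≤ nw y + nw z := fun y z =>
    aux_nw_triangle M w (fun i => (hw i).le) y z
  have hnw_cs : ∀ y z : Fin M → ℝ, |∑ i, w i * (y i * z i)| ≤ nw y * nw z := by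
    intro y z
    have h1 : (∑ i, w i * (y i * z i)) =
        ∑ i, (Real.sqrt (w i) * y i) * (Real.sqrt (w i) * z i) := by
      refine Finset.sum_congr rfl fun i _ => ?_
      rw [mul_mul_mul_comm, Real.mul_self_sqrt (hw i).le]
    rw [h1]
    calc |∑ i, (Real.sqrt (w i) * y i) * (Real.sqrt (w i) * z i)|
        = Real.sqrt ((∑ i, (Real.sqrt (w i) * y i) * (Real.sqrt (w i) * z i)) ^ 2) :=
          (Real.sqrt_sq_eq_abs _).symm
      _ ≤ Real.sqrt ((∑ i, (Real.sqrt (w i) * y i) ^ 2) * (∑ i, (Real.sqrt (w i) * z i) ^ 2)) :=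
          Real.sqrt_le_sqrt (Finset.sum_mul_sq_le_sq_mul_sq _ _ _)
      _ = nw y * nw z := by
          rw [Real.sqrt_mul (by positivity)]
          congr 1 <;>
          · rw [hnwdef]
            congr 1
            exact Finset.sum_congr rfl fun i _ => by
              rw [mul_pow, Real.sq_sqrt (hw i).le]
  -- sup-norm bound for the discrete norm
  have hnw_sup : ∀ g : C(Γ, ℝ),
      nw (fun i => g (x i)) ≤ Real.sqrt (μ Set.univ).toReal * ‖g‖ := by
    intro g
    have h1 : (∑ i, w i * g (x i) ^ 2) ≤ (μ Set.univ).toReal * ‖g‖ ^ 2 := by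
      rw [← hsum, Finset.sum_mul]
      refine Finset.sum_le_sum fun i _ => ?_
      have h2 : g (x i) ^ 2 ≤ ‖g‖ ^ 2 := by
        rw [← sq_abs]
        exact pow_le_pow_left₀ (abs_nonneg _) (g.norm_coe_le_norm (x i)) 2
      exact mul_le_mul_of_nonneg_left h2 (hw i).le
    calc nw (fun i => g (x i)) ≤ Real.sqrt ((μ Set.univ).toReal * ‖g‖ ^ 2) :=
          Real.sqrt_le_sqrt h1
      _ = Real.sqrt (μ Set.univ).toReal * ‖g‖ := by
          rw [Real.sqrt_mul ENNReal.toReal_nonneg, Real.sqrt_sq (norm_nonneg _)]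
  -- sup-norm bound for the L² norm
  have hTsup : ∀ g : C(Γ, ℝ), ‖T g‖ ≤ Real.sqrt (μ Set.univ).toReal * ‖g‖ := by
    intro g
    have hb : ∀ t, ‖g t ^ 2‖ ≤ ‖g‖ ^ 2 := by
      intro t
      rw [norm_pow]
      exact pow_le_pow_left₀ (norm_nonneg _) (g.norm_coe_le_norm t) 2
    have hint : Integrable (fun t => g t ^ 2) μ :=
      (memLp_top_of_bound (g.continuous.pow 2).aestronglyMeasurable (‖g‖ ^ 2)
        (Filter.Eventually.of_forall hb)).integrable le_top
    have h1 : (∫ t, g t ^ 2 ∂μ) ≤ (μ Set.univ).toReal * ‖g‖ ^ 2 := by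
      have := integral_mono hint (integrable_const (‖g‖ ^ 2)) fun t => by
        rw [← sq_abs]
        exact pow_le_pow_left₀ (abs_nonneg _) (g.norm_coe_le_norm t) 2
      rwa [integral_const, smul_eq_mul] at this
    rw [← Real.sqrt_sq (norm_nonneg (T g)), hnormsq]
    calc Real.sqrt (∫ t, g t ^ 2 ∂μ) ≤ Real.sqrt ((μ Set.univ).toReal * ‖g‖ ^ 2) :=
          Real.sqrt_le_sqrt h1
      _ = Real.sqrt (μ Set.univ).toReal * ‖g‖ := by
          rw [Real.sqrt_mul ENNReal.toReal_nonneg, Real.sqrt_sq (norm_nonneg _)]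
  -- quadrature exactness in norm form
  have hVnw : ∀ g ∈ V, nw (fun i => g (x i)) = ‖T g‖ := by
    intro g hg
    rw [← Real.sqrt_sq (norm_nonneg (T g)), hnormsq, hnwdef]
    have : (∫ t, g t ^ 2 ∂μ) = ∑ i, w i * g (x i) ^ 2 := by
      rw [show (∫ t, g t ^ 2 ∂μ) = ∫ t, g t * g t ∂μ by congr 1; funext t; ring,
        hquad g hg g hg]
      exact Finset.sum_congr rfl fun i _ => by ring
    rw [this]
  -- elements of A are in V and have L²-norm at most 1
  have hAV : ∀ a ∈ A, a ∈ V := by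
    intro a ha
    rw [hA] at ha
    obtain ⟨k, l, -, rfl⟩ := ha
    exact Submodule.smul_mem _ _ (Submodule.sub_mem _ (huV k) (huV l))
  have hAnorm : ∀ a ∈ A, ‖T a‖ ≤ 1 := by
    intro a ha
    rw [hA] at ha
    obtain ⟨k, l, -, rfl⟩ := ha
    rw [T.map_smul, norm_smul, hL2T]
    rcases eq_or_ne ‖T (u k - u l)‖ 0 with h0 | h0
    · rw [h0, mul_zero]; norm_num
    · rw [norm_inv, Real.norm_eq_abs, abs_of_nonneg (norm_nonneg _), inv_mul_cancel₀ h0]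
  have hHub : ∀ k, ∀ a ∈ A, |h k a| ≤ H k := fun k a ha => (hH k).2 ⟨a, ha, rfl⟩
  have hHnonneg : ∀ k, 0 ≤ H k := by
    intro k
    obtain ⟨k0, l0, hkl⟩ := hne
    have hmem : ((L2norm (u k0 - u l0))⁻¹ • (u k0 - u l0)) ∈ A := by
      rw [hA]; exact ⟨k0, l0, hkl, rfl⟩
    exact le_trans (abs_nonneg _) (hHub k _ hmem)
  -- the value h k a for a ∈ A via quadrature
  have hhV : ∀ k, ∀ a ∈ A, h k a = ∑ i, w i * ((u k (x i) - f (x i)) * a (x i)) := by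
    intro k a ha
    rw [hh, hquad (u k) (huV k) a (hAV a ha), ← Finset.sum_sub_distrib]
    exact Finset.sum_congr rfl fun i _ => by ring
  -- Step B : ‖T (u kopt - u kstar)‖ ≤ 2 * H kopt
  have hB : ‖T (u kopt - u kstar)‖ ≤ 2 * H kopt := by
    rcases eq_or_ne (u kopt) (u kstar) with heq | hne2
    · rw [heq, sub_self, map_zero, norm_zero]
      linarith [hHnonneg kopt]
    rcases eq_or_ne ‖T (u kopt - u kstar)‖ 0 with h0 | h0
    · rw [h0]; linarith [hHnonneg kopt]
    set d := u kopt - u kstar with hd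
    set a := (L2norm d)⁻¹ • d with ha
    have haA : a ∈ A := by rw [hA]; exact ⟨kopt, kstar, hne2, rfl⟩
    have hTa : T a = ‖T d‖⁻¹ • T d := by rw [ha, T.map_smul, hL2T]
    have hinner_d : ⟪T d, T a⟫ = ‖T d‖ := by
      rw [hTa, real_inner_smul_right, real_inner_self_eq_norm_sq, sq, ← mul_assoc,
        inv_mul_cancel₀ h0, one_mul]
    have hdiff : h kopt a - h kstar a = ⟪T d, T a⟫ := by
      rw [hh kopt a, hh kstar a, ← hinner (u kopt) a, ← hinner (u kstar) a, hd, map_sub,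
        inner_sub_left]
      ring
    have hkey : ‖T d‖ ≤ H kopt + H kstar := by
      have h1 := le_abs_self (h kopt a)
      have h2 := neg_abs_le (h kstar a)
      have h3 := hHub kopt a haA
      have h4 := hHub kstar a haA
      have h5 : ‖T d‖ = h kopt a - h kstar a := by rw [hdiff, hinner_d]
      linarith
    linarith [hkstar kopt]
  -- Step C : H kopt ≤ ‖T (udag - u kopt)‖ + 2 √(μ Γ) ‖udag - ubest‖ + ε
  have hC : H kopt ≤ ‖T (udag - u kopt)‖ +
      2 * (Real.sqrt (μ Set.univ).toReal * ‖udag - ubest‖) + ε := by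
    obtain ⟨a, haA, hval⟩ := (hH kopt).1
    have hcs : |h kopt a| ≤ nw (fun i => u kopt (x i) - f (x i)) * nw (fun i => a (x i)) := by
      rw [hhV kopt a haA]
      exact hnw_cs _ _
    have hna : nw (fun i => a (x i)) ≤ 1 := by
      rw [hVnw a (hAV a haA)]
      exact hAnorm a haA
    have hnw_nonneg : ∀ y : Fin M → ℝ, 0 ≤ nw y := fun y => Real.sqrt_nonneg _
    -- decompose
    have hdec : nw (fun i => u kopt (x i) - f (x i)) ≤
        nw (fun i => (u kopt - ubest) (x i)) + nw (fun i => (ubest - udag) (x i)) +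
        nw (fun i => (udag - f) (x i)) := by
      have e1 : (fun i => u kopt (x i) - f (x i)) =
          (fun i => ((u kopt - ubest) (x i) + (ubest - udag) (x i)) + (udag - f) (x i)) := by
        funext i
        simp only [ContinuousMap.sub_apply]
        ring
      rw [e1]
      calc nw (fun i => ((u kopt - ubest) (x i) + (ubest - udag) (x i)) + (udag - f) (x i))
          ≤ nw (fun i => (u kopt - ubest) (x i) + (ubest - udag) (x i)) +
            nw (fun i => (udag - f) (x i)) := hnw_tri _ _
        _ ≤ _ := by
            have := hnw_tri (fun i => (u kopt - ubest) (x i)) (fun i => (ubest - udag) (x i))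
            linarith
    -- bound each piece
    have hp1 : nw (fun i => (u kopt - ubest) (x i)) ≤
        ‖T (udag - u kopt)‖ + Real.sqrt (μ Set.univ).toReal * ‖udag - ubest‖ := by
      rw [hVnw _ (Submodule.sub_mem _ (huV kopt) hubestV)]
      have e2 : T (u kopt - ubest) = T (udag - ubest) - T (udag - u kopt) := by
        rw [← map_sub]
        congr 1
        abel
      rw [e2]
      calc ‖T (udag - ubest) - T (udag - u kopt)‖
          ≤ ‖T (udag - ubest)‖ + ‖T (udag - u kopt)‖ := norm_sub_le _ _
        _ ≤ ‖T (udag - u kopt)‖ + Real.sqrt (μ Set.univ).toReal * ‖udag - ubest‖ := by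
            linarith [hTsup (udag - ubest)]
    have hp2 : nw (fun i => (ubest - udag) (x i)) ≤
        Real.sqrt (μ Set.univ).toReal * ‖udag - ubest‖ := by
      calc nw (fun i => (ubest - udag) (x i))
          ≤ Real.sqrt (μ Set.univ).toReal * ‖ubest - udag‖ := hnw_sup _
        _ = Real.sqrt (μ Set.univ).toReal * ‖udag - ubest‖ := by rw [norm_sub_rev]
    have hp3 : nw (fun i => (udag - f) (x i)) ≤ ε := by
      have e3 : nw (fun i => (udag - f) (x i)) =
          Real.sqrt (∑ i, w i * (udag (x i) - f (x i)) ^ 2) := by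
        simp only [hnwdef, ContinuousMap.sub_apply]
      rw [e3]; exact hnoise
    have hfin : |h kopt a| ≤ nw (fun i => u kopt (x i) - f (x i)) := by
      calc |h kopt a| ≤ nw (fun i => u kopt (x i) - f (x i)) * nw (fun i => a (x i)) := hcs
        _ ≤ nw (fun i => u kopt (x i) - f (x i)) * 1 :=
            mul_le_mul_of_nonneg_left hna (hnw_nonneg _)
        _ = nw (fun i => u kopt (x i) - f (x i)) := mul_one _
    rw [← hval]
    linarith
  -- assemble
  have hmain : ‖T (udag - u kstar)‖ ≤ ‖T (udag - u kopt)‖ + ‖T (u kopt - u kstar)‖ := by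
    have e : udag - u kstar = (udag - u kopt) + (u kopt - u kstar) := by abel
    rw [e, map_add]
    exact norm_add_le _ _
  rw [hL2T, hL2T]
  linarith
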